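/- In the random string model over {0,1,2,3} with uniform symbols, assuming k = m/2, k < 100, and p < k/5 (with p > 4), the expected total minimum-substring-partition size (kl/m)n + n of a dataset of n/m reads each of length m is less than 8.4n, where l = P_1(k,p)(m-k) is the expected number of breaks per read. -/

import Mathlib

open scoped Classical

def substr {α : Type*} (s : List α) (i len : ℕ) : List α := (s.drop i).take len

def uniqueMinAt {α : Type*} [LinearOrder α] (s : List α) (p i : ℕ) : Prop :=
  i + p ≤ s.length ∧ ∀ j, j + p ≤ s.length → j ≠ i → substr s i p < substr s j p

/-- `P₁(k,p)`: probability that for a uniform random string in `{0,1,2,3}^{k+1}` the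
first or last `p`-substring is the unique minimum `p`-substring. -/
noncomputable def P1 (k p : ℕ) : ℚ :=
  ((Finset.univ.filter fun s : Fin (k + 1) → Fin 4 =>
    uniqueMinAt (List.ofFn s) p 0 ∨ uniqueMinAt (List.ofFn s) p (k + 1 - p)).card : ℚ)
    / 4 ^ (k + 1)

lemma take_le_take {α : Type*} [LinearOrder α] {l₁ l₂ : List α} (h : l₁ < l₂) (q : ℕ) :
    l₁.take q ≤ l₂.take q := by
  change List.Lex (· < ·) l₁ l₂ at h
  induction h generalizing q with
  | nil => cases q <;> simp; exact le_of_lt List.Lex.nil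
  | @cons a l₁' l₂' h ih =>
    cases q with
    | zero => simp
    | succ q => simpa using List.cons_le_cons a (ih q)
  | @rel a l₁' b l₂' h =>
    cases q with
    | zero => simp
    | succ q => exact le_of_lt (List.Lex.rel h)

lemma substr_ofFn {α : Type*} {N : ℕ} (s : Fin N → α) {i q : ℕ} (h : i + q ≤ N) :
    substr (List.ofFn s) i q = List.ofFn (fun r : Fin q => s ⟨i + r.1, by omega⟩) := by
  apply List.ext_getElem
  · simp [substr]; omega
  · intro r h1 h2
    simp only [substr, List.getElem_take, List.getElem_drop, List.getElem_ofFn]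

section Core

variable {N q t : ℕ} (d : Fin (t + 1) → ℕ)

/-- the `b`-th block of length `q` -/
def blk (q : ℕ) (s : Fin N → Fin 4) (b : Fin (t + 1)) : List (Fin 4) :=
  substr (List.ofFn s) (d b) q

/-- swap block 0 and block c -/
def swp (hdN : ∀ b, d b + q ≤ N) (c : Fin (t + 1)) (s : Fin N → Fin 4) :
    Fin N → Fin 4 := fun x =>
  if h : d 0 ≤ x.1 ∧ x.1 < d 0 + q then s ⟨d c + (x.1 - d 0), by have := hdN c; omega⟩
  else if h2 : d c ≤ x.1 ∧ x.1 < d c + q then s ⟨d 0 + (x.1 - d c), by have := hdN 0; omega⟩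
  else s x

variable (hdN : ∀ b, d b + q ≤ N)
  (hdisj : ∀ b b' : Fin (t+1), b ≠ b' → d b + q ≤ d b' ∨ d b' + q ≤ d b)

lemma swp_eval0 (c : Fin (t+1)) (s : Fin N → Fin 4) (x : Fin N)
    (hx : d 0 ≤ x.1 ∧ x.1 < d 0 + q) :
    swp d hdN c s x = s ⟨d c + (x.1 - d 0), by have := hdN c; omega⟩ := dif_pos hx

include hdisj in
lemma swp_evalc {c : Fin (t+1)} (hc : c ≠ 0) (s : Fin N → Fin 4) (x : Fin N)
    (hx : d c ≤ x.1 ∧ x.1 < d c + q) :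
    swp d hdN c s x = s ⟨d 0 + (x.1 - d c), by have := hdN 0; omega⟩ := by
  have h0 := hdisj c 0 hc
  rw [swp, dif_neg (by omega), dif_pos hx]

lemma swp_evalo (c : Fin (t+1)) (s : Fin N → Fin 4) (x : Fin N)
    (hx0 : ¬(d 0 ≤ x.1 ∧ x.1 < d 0 + q)) (hxc : ¬(d c ≤ x.1 ∧ x.1 < d c + q)) :
    swp d hdN c s x = s x := by
  rw [swp, dif_neg hx0, dif_neg hxc]

include hdisj in
lemma swp_invol {c : Fin (t+1)} (hc : c ≠ 0) (s : Fin N → Fin 4) :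
    swp d hdN c (swp d hdN c s) = s := by
  have hdj := hdisj c 0 hc
  funext x
  by_cases h0 : d 0 ≤ x.1 ∧ x.1 < d 0 + q
  · rw [swp_eval0 d hdN c _ x h0, swp_evalc d hdN hdisj hc s _ (by simp; omega)]
    congr 1; apply Fin.ext; simp; omega
  · by_cases hcx : d c ≤ x.1 ∧ x.1 < d c + q
    · rw [swp_evalc d hdN hdisj hc _ x hcx, swp_eval0 d hdN c s _ (by simp; omega)]
      congr 1; apply Fin.ext; simp; omega
    · rw [swp_evalo d hdN c _ x h0 hcx, swp_evalo d hdN c s x h0 hcx]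

lemma blk_swp0 {c : Fin (t+1)} (hc : c ≠ 0) (s : Fin N → Fin 4) :
    blk d q (swp d hdN c s) 0 = blk d q s c := by
  rw [blk, blk, substr_ofFn _ (hdN 0), substr_ofFn _ (hdN c)]
  congr 1; funext r
  rw [swp_eval0 d hdN c s _ (by simp)]
  congr 1
  exact Fin.ext (by simp)

include hdisj in
lemma blk_swpc {c : Fin (t+1)} (hc : c ≠ 0) (s : Fin N → Fin 4) :
    blk d q (swp d hdN c s) c = blk d q s 0 := by
  rw [blk, blk, substr_ofFn _ (hdN c), substr_ofFn _ (hdN 0)]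
  congr 1; funext r
  rw [swp_evalc d hdN hdisj hc s _ (by simp)]
  congr 1
  exact Fin.ext (by simp)

include hdisj in
lemma blk_swpo {c b : Fin (t+1)} (hc : c ≠ 0) (hb0 : b ≠ 0) (hbc : b ≠ c)
    (s : Fin N → Fin 4) : blk d q (swp d hdN c s) b = blk d q s b := by
  have h1 := hdisj b 0 hb0
  have h2 := hdisj b c hbc
  rw [blk, blk, substr_ofFn _ (hdN b), substr_ofFn _ (hdN b)]
  congr 1; funext r
  rw [swp_evalo d hdN c s _ (by simp; omega) (by simp; omega)]

end Core

lemma substr_take {α : Type*} (L : List α) (i p q : ℕ) (hqp : q ≤ p) :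
    (substr L i p).take q = substr L i q := by
  simp [substr, List.take_take, min_eq_left hqp]

section Count

variable {N q t : ℕ} (d : Fin (t + 1) → ℕ)

/-- event: block `c` is the strict minimum block -/
def Emin (N : ℕ) {t : ℕ} (d : Fin (t+1) → ℕ) (q : ℕ) (c : Fin (t + 1)) :
    Finset (Fin N → Fin 4) :=
  Finset.univ.filter fun s => ∀ b, b ≠ c → blk d q s c < blk d q s b

variable (hdN : ∀ b, d b + q ≤ N)
  (hdisj : ∀ b b' : Fin (t+1), b ≠ b' → d b + q ≤ d b' ∨ d b' + q ≤ d b)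

include hdN hdisj in
lemma card_Emin_eq (c : Fin (t+1)) : (Emin N d q 0).card = (Emin N d q c).card := by
  by_cases hc : c = 0
  · rw [hc]
  · push_neg at hc
    apply Finset.card_bij' (fun s _ => swp d hdN c s) (fun s _ => swp d hdN c s)
    · intro s hs
      simp only [Emin, Finset.mem_filter, Finset.mem_univ, true_and] at hs ⊢
      intro b hb
      rw [blk_swpc d hdN hdisj hc]
      by_cases hb0 : b = 0
      · rw [hb0, blk_swp0 d hdN hc]
        exact hs c hc
      · rw [blk_swpo d hdN hdisj hc hb0 hb]
        exact hs b hb0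
    · intro s hs
      simp only [Emin, Finset.mem_filter, Finset.mem_univ, true_and] at hs ⊢
      intro b hb
      rw [blk_swp0 d hdN hc]
      by_cases hbc : b = c
      · rw [hbc, blk_swpc d hdN hdisj hc]
        exact hs 0 (Ne.symm hc)
      · rw [blk_swpo d hdN hdisj hc hb hbc]
        exact hs b hbc
    · intro s _; exact swp_invol d hdN hdisj hc s
    · intro s _; exact swp_invol d hdN hdisj hc s

include hdN hdisj in
lemma card_Emin_mul : (t + 1) * (Emin N d q 0).card ≤ 4 ^ N := by
  have hdisjE : ∀ c c' : Fin (t+1), c ≠ c' → Disjoint (Emin N d q c) (Emin N d q c') := by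
    intro c c' hcc
    rw [Finset.disjoint_left]
    intro s hs hs'
    simp only [Emin, Finset.mem_filter, Finset.mem_univ, true_and] at hs hs'
    exact absurd (hs c' (Ne.symm hcc)) (not_lt_of_gt (hs' c hcc))
  calc (t + 1) * (Emin N d q 0).card
      = ∑ _c : Fin (t+1), (Emin N d q 0).card := by
        rw [Finset.sum_const, Finset.card_univ, Fintype.card_fin, smul_eq_mul]
    _ = ∑ c : Fin (t+1), (Emin N d q c).card :=
        Finset.sum_congr rfl fun c _ => card_Emin_eq d hdN hdisj c
    _ = (Finset.univ.biUnion (Emin N d q)).card :=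
        (Finset.card_biUnion (fun c _ c' _ h => hdisjE c c' h)).symm
    _ ≤ (Finset.univ : Finset (Fin N → Fin 4)).card :=
        Finset.card_le_card (Finset.subset_univ _)
    _ = 4 ^ N := by simp

include hdN hdisj in
lemma card_tie_le {b : Fin (t+1)} (hb : b ≠ 0) :
    (Finset.univ.filter fun s : Fin N → Fin 4 => blk d q s b = blk d q s 0).card
      ≤ 4 ^ (N - q) := by
  classical
  set B : Finset (Fin N) :=
    Finset.image (fun r : Fin q => (⟨d b + r.1, by have := hdN b; omega⟩ : Fin N))
      Finset.univ with hB
  have hBcard : B.card = q := by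
    rw [hB, Finset.card_image_of_injective _ ?_, Finset.card_univ, Fintype.card_fin]
    intro r r' h
    have := congrArg Fin.val h
    simp only at this
    exact Fin.ext (by omega)
  have hpoint : ∀ s : Fin N → Fin 4, blk d q s b = blk d q s 0 →
      ∀ r : Fin q, s ⟨d b + r.1, by have := hdN b; omega⟩
        = s ⟨d 0 + r.1, by have := hdN 0; omega⟩ := by
    intro s hs r
    rw [blk, blk, substr_ofFn _ (hdN b), substr_ofFn _ (hdN 0)] at hs
    have := congrFun (List.ofFn_injective hs) r
    exact this
  have hd0B : ∀ r : Fin q, (⟨d 0 + r.1, by have := hdN 0; omega⟩ : Fin N) ∉ B := by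
    intro r hr
    rw [hB, Finset.mem_image] at hr
    obtain ⟨r', -, hr'⟩ := hr
    have := congrArg Fin.val hr'
    simp only at this
    have hdj := hdisj b 0 hb
    omega
  have hinj : Set.InjOn (fun (s : Fin N → Fin 4) (x : {x // x ∈ Bᶜ}) => s x.1)
      ((Finset.univ.filter fun s : Fin N → Fin 4 => blk d q s b = blk d q s 0) :
        Set (Fin N → Fin 4)) := by
    intro s hs s' hs' hff
    simp only [Finset.coe_filter, Set.mem_setOf_eq, Finset.mem_univ, true_and] at hs hs'
    funext x
    by_cases hxB : x ∈ B
    · rw [hB, Finset.mem_image] at hxB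
      obtain ⟨r, -, rfl⟩ := hxB
      rw [hpoint s hs r, hpoint s' hs' r]
      exact congrFun hff ⟨_, Finset.mem_compl.mpr (hd0B r)⟩
    · exact congrFun hff ⟨x, Finset.mem_compl.mpr hxB⟩
  calc (Finset.univ.filter fun s : Fin N → Fin 4 => blk d q s b = blk d q s 0).card
      ≤ (Finset.univ : Finset ({x // x ∈ Bᶜ} → Fin 4)).card :=
        Finset.card_le_card_of_injOn _ (fun s _ => Finset.mem_univ _) hinj
    _ = 4 ^ (N - q) := by
        rw [Finset.card_univ, Fintype.card_fun, Fintype.card_coe, Finset.card_compl,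
          hBcard, Fintype.card_fin, Fintype.card_fin]

end Count

lemma card_uniqueMin_le {N q p t : ℕ} (d : Fin (t + 1) → ℕ) (hq : 0 < q) (hqp : q ≤ p)
    (hdN : ∀ b, d b + q ≤ N)
    (hdisj : ∀ b b' : Fin (t+1), b ≠ b' → d b + q ≤ d b' ∨ d b' + q ≤ d b)
    (hdp : ∀ b, d b + p ≤ N) :
    (Finset.univ.filter fun s : Fin N → Fin 4 =>
        uniqueMinAt (List.ofFn s) p (d 0)).card * (t + 1)
      ≤ 4 ^ N + (t + 1) * (t * 4 ^ (N - q)) := by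
  classical
  set A : Finset (Fin N → Fin 4) :=
    Finset.univ.filter fun s => uniqueMinAt (List.ofFn s) p (d 0) with hA
  have hsub : A ⊆ (Emin N d q 0) ∪
      ((Finset.univ.erase (0 : Fin (t+1))).biUnion fun b =>
        Finset.univ.filter fun s : Fin N → Fin 4 => blk d q s b = blk d q s 0) := by
    intro s hs
    rw [hA, Finset.mem_filter] at hs
    obtain ⟨-, -, hmin⟩ := hs
    by_cases htie : ∃ b : Fin (t+1), b ≠ 0 ∧ blk d q s b = blk d q s 0
    · obtain ⟨b, hb, hbe⟩ := htie
      exact Finset.mem_union_right _ (Finset.mem_biUnion.mpr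
        ⟨b, Finset.mem_erase.mpr ⟨hb, Finset.mem_univ _⟩,
          Finset.mem_filter.mpr ⟨Finset.mem_univ _, hbe⟩⟩)
    · push_neg at htie
      apply Finset.mem_union_left
      rw [Emin, Finset.mem_filter]
      refine ⟨Finset.mem_univ _, fun b hb => ?_⟩
      have hne : d b ≠ d 0 := by
        rcases hdisj b 0 hb with h | h <;> omega
      have hlt := hmin (d b) (by rw [List.length_ofFn]; exact hdp b) hne
      have hle : blk d q s 0 ≤ blk d q s b := by
        have h := take_le_take hlt q
        rwa [substr_take _ _ _ _ hqp, substr_take _ _ _ _ hqp] at h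
      exact lt_of_le_of_ne hle fun h => hb (False.elim (htie b hb h.symm))
  have hcard : A.card ≤ (Emin N d q 0).card + t * 4 ^ (N - q) := by
    calc A.card ≤ _ := Finset.card_le_card hsub
      _ ≤ (Emin N d q 0).card + ((Finset.univ.erase (0 : Fin (t+1))).biUnion fun b =>
            Finset.univ.filter fun s : Fin N → Fin 4 =>
              blk d q s b = blk d q s 0).card := Finset.card_union_le _ _
      _ ≤ (Emin N d q 0).card + t * 4 ^ (N - q) := by
        gcongr
        calc ((Finset.univ.erase (0 : Fin (t+1))).biUnion fun b =>
              Finset.univ.filter fun s : Fin N → Fin 4 =>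
                blk d q s b = blk d q s 0).card
            ≤ ∑ b ∈ Finset.univ.erase (0 : Fin (t+1)),
              (Finset.univ.filter fun s : Fin N → Fin 4 =>
                blk d q s b = blk d q s 0).card := Finset.card_biUnion_le
          _ ≤ ∑ _b ∈ Finset.univ.erase (0 : Fin (t+1)), 4 ^ (N - q) := by
              apply Finset.sum_le_sum
              intro b hb
              exact card_tie_le d hdN hdisj (Finset.mem_erase.mp hb).1
          _ = t * 4 ^ (N - q) := by
              rw [Finset.sum_const, smul_eq_mul, Finset.card_erase_of_mem (Finset.mem_univ _),
                Finset.card_univ, Fintype.card_fin]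
              simp
  calc A.card * (t + 1) ≤ ((Emin N d q 0).card + t * 4 ^ (N - q)) * (t + 1) := by
        exact Nat.mul_le_mul_right _ hcard
    _ = (t + 1) * (Emin N d q 0).card + (t + 1) * (t * 4 ^ (N - q)) := by ring
    _ ≤ 4 ^ N + (t + 1) * (t * 4 ^ (N - q)) := by
        gcongr
        exact card_Emin_mul d hdN hdisj

lemma P1_card_le (k p q : ℕ) (hq : 0 < q) (hqp : q ≤ p) (hpk : p ≤ k + 1) :
    (Finset.univ.filter fun s : Fin (k + 1) → Fin 4 =>
        uniqueMinAt (List.ofFn s) p 0 ∨ uniqueMinAt (List.ofFn s) p (k + 1 - p)).card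
      * ((k + 1 - p) / q + 1)
      ≤ 2 * (4 ^ (k + 1) + ((k + 1 - p) / q + 1) * ((k + 1 - p) / q * 4 ^ (k + 1 - q))) := by
  classical
  set t := (k + 1 - p) / q with ht
  have hkey : ∀ b : Fin (t + 1), q * b.1 ≤ k + 1 - p := by
    intro b
    calc q * b.1 ≤ q * t := Nat.mul_le_mul_left q (Nat.le_of_lt_succ b.2)
      _ ≤ k + 1 - p := by rw [ht, Nat.mul_comm]; exact Nat.div_mul_le_self _ _
  -- first family: blocks from the left
  have h0 := card_uniqueMin_le (N := k + 1) (q := q) (p := p)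
    (fun b : Fin (t + 1) => q * b.1) hq hqp
    (fun b => by show q * b.1 + q ≤ k + 1; have := hkey b; omega)
    (fun b b' hbb => by
      show q * b.1 + q ≤ q * b'.1 ∨ q * b'.1 + q ≤ q * b.1
      have hne : b.1 ≠ b'.1 := fun h => hbb (Fin.ext h)
      rcases Nat.lt_or_ge b.1 b'.1 with h | h
      · left
        have h2 : q * (b.1 + 1) ≤ q * b'.1 := Nat.mul_le_mul_left _ (by omega)
        rw [Nat.mul_succ] at h2; omega
      · right
        have h2 : q * (b'.1 + 1) ≤ q * b.1 := Nat.mul_le_mul_left _ (by omega)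
        rw [Nat.mul_succ] at h2; omega)
    (fun b => by show q * b.1 + p ≤ k + 1; have := hkey b; omega)
  -- second family: blocks from the right
  have h1 := card_uniqueMin_le (N := k + 1) (q := q) (p := p)
    (fun b : Fin (t + 1) => (k + 1 - p) - q * b.1) hq hqp
    (fun b => by show (k + 1 - p) - q * b.1 + q ≤ k + 1; have := hkey b; omega)
    (fun b b' hbb => by
      show (k + 1 - p) - q * b.1 + q ≤ (k + 1 - p) - q * b'.1 ∨
        (k + 1 - p) - q * b'.1 + q ≤ (k + 1 - p) - q * b.1
      have hne : b.1 ≠ b'.1 := fun h => hbb (Fin.ext h)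
      have k1 := hkey b
      have k2 := hkey b'
      rcases Nat.lt_or_ge b.1 b'.1 with h | h
      · right
        have h2 : q * (b.1 + 1) ≤ q * b'.1 := Nat.mul_le_mul_left _ (by omega)
        rw [Nat.mul_succ] at h2; omega
      · left
        have h2 : q * (b'.1 + 1) ≤ q * b.1 := Nat.mul_le_mul_left _ (by omega)
        rw [Nat.mul_succ] at h2; omega)
    (fun b => by show (k + 1 - p) - q * b.1 + p ≤ k + 1; have := hkey b; omega)
  simp only [Fin.val_zero, Nat.mul_zero, Nat.sub_zero] at h0 h1
  have hun : (Finset.univ.filter fun s : Fin (k + 1) → Fin 4 =>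
        uniqueMinAt (List.ofFn s) p 0 ∨ uniqueMinAt (List.ofFn s) p (k + 1 - p)).card
      ≤ (Finset.univ.filter fun s : Fin (k + 1) → Fin 4 =>
          uniqueMinAt (List.ofFn s) p 0).card
        + (Finset.univ.filter fun s : Fin (k + 1) → Fin 4 =>
          uniqueMinAt (List.ofFn s) p (k + 1 - p)).card := by
    rw [Finset.filter_or]
    exact Finset.card_union_le _ _
  calc (Finset.univ.filter fun s : Fin (k + 1) → Fin 4 =>
        uniqueMinAt (List.ofFn s) p 0 ∨ uniqueMinAt (List.ofFn s) p (k + 1 - p)).card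
      * (t + 1)
      ≤ ((Finset.univ.filter fun s : Fin (k + 1) → Fin 4 =>
          uniqueMinAt (List.ofFn s) p 0).card
        + (Finset.univ.filter fun s : Fin (k + 1) → Fin 4 =>
          uniqueMinAt (List.ofFn s) p (k + 1 - p)).card) * (t + 1) :=
        Nat.mul_le_mul_right _ hun
    _ ≤ 2 * (4 ^ (k + 1) + (t + 1) * (t * 4 ^ (k + 1 - q))) := by
        rw [Nat.add_mul]; convert (Nat.add_le_add h0 h1).trans_eq (two_mul _).symm <;> ext <;> simp

lemma P1_le (k p q : ℕ) (hq : 0 < q) (hqp : q ≤ p) (hpk : p ≤ k + 1) :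
    P1 k p ≤ 2 / ((((k + 1 - p) / q : ℕ) : ℚ) + 1)
      + 2 * (((k + 1 - p) / q : ℕ) : ℚ) / 4 ^ q := by
  have hqk : q ≤ k + 1 := le_trans hqp hpk
  set t : ℕ := (k + 1 - p) / q with ht
  have key : ((Finset.univ.filter fun s : Fin (k + 1) → Fin 4 =>
        uniqueMinAt (List.ofFn s) p 0 ∨ uniqueMinAt (List.ofFn s) p (k + 1 - p)).card : ℚ)
      * ((t : ℚ) + 1) ≤ 2 * (4 ^ (k + 1) + ((t : ℚ) + 1) * ((t : ℚ) * 4 ^ (k + 1 - q))) := by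
    exact_mod_cast P1_card_le k p q hq hqp hpk
  have h4 : (0 : ℚ) < 4 ^ (k + 1) := by positivity
  have ht1 : (0 : ℚ) < (t : ℚ) + 1 := by positivity
  have hpow : (4 : ℚ) ^ (k + 1) = 4 ^ q * 4 ^ (k + 1 - q) := by
    rw [← pow_add]; congr 1; omega
  rw [P1, div_le_iff₀ h4]
  calc ((Finset.univ.filter fun s : Fin (k + 1) → Fin 4 =>
        uniqueMinAt (List.ofFn s) p 0 ∨ uniqueMinAt (List.ofFn s) p (k + 1 - p)).card : ℚ)
      ≤ 2 * (4 ^ (k + 1) + ((t : ℚ) + 1) * ((t : ℚ) * 4 ^ (k + 1 - q))) / ((t : ℚ) + 1) := by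
        rw [le_div_iff₀ ht1]; exact key
    _ = (2 / ((t : ℚ) + 1) + 2 * (t : ℚ) / 4 ^ q) * 4 ^ (k + 1) := by
        rw [hpow]; field_simp

set_option maxRecDepth 10000 in
lemma numeric : ∀ k < 100, ∀ p < 20, 4 < p → 5 * p < k →
    (10 * k * (4 ^ 5 + ((k + 1 - p) / 5 + 1) * ((k + 1 - p) / 5))
        < 74 * ((k + 1 - p) / 5 + 1) * 4 ^ 5) ∨
    (6 ≤ p ∧ 10 * k * (4 ^ 6 + ((k + 1 - p) / 6 + 1) * ((k + 1 - p) / 6))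
        < 74 * ((k + 1 - p) / 6 + 1) * 4 ^ 6) := by decide

lemma P1_mul_lt (k p : ℕ) (hk : k < 100) (hp : 4 < p) (hpk : 5 * p < k) :
    P1 k p * k < 74 / 5 := by
  have hp20 : p < 20 := by omega
  have hP0 : (0 : ℚ) ≤ P1 k p := by
    rw [P1]; positivity
  have hkQ : (0 : ℚ) ≤ (k : ℚ) := by positivity
  have main : ∀ q : ℕ, 0 < q → q ≤ p →
      (10 * k * (4 ^ q + ((k + 1 - p) / q + 1) * ((k + 1 - p) / q))
        < 74 * ((k + 1 - p) / q + 1) * 4 ^ q) → P1 k p * k < 74 / 5 := by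
    intro q hq hqp h
    set t : ℕ := (k + 1 - p) / q with ht
    have hP := P1_le k p q hq hqp (by omega)
    have ht1 : (0 : ℚ) < (t : ℚ) + 1 := by positivity
    have h4q : (0 : ℚ) < (4 : ℚ) ^ q := by positivity
    have h' : (10 * (k : ℚ) * (4 ^ q + ((t : ℚ) + 1) * (t : ℚ))
        < 74 * ((t : ℚ) + 1) * 4 ^ q) := by exact_mod_cast h
    calc P1 k p * k ≤ (2 / ((t : ℚ) + 1) + 2 * (t : ℚ) / 4 ^ q) * k :=
          mul_le_mul_of_nonneg_right hP hkQ
      _ < 74 / 5 := by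
          rw [div_add_div _ _ (ne_of_gt ht1) (ne_of_gt h4q), div_mul_eq_mul_div,
            div_lt_div_iff₀ (by positivity) (by norm_num)]
          linear_combination h'
  rcases numeric k hk p hp20 hp hpk with h | ⟨hp6, h⟩
  · exact main 5 (by norm_num) (by omega) h
  · exact main 6 (by norm_num) hp6 h

/-- assuming `k = m/2`, `k < 100` and `4 < p < k/5`, the expected total
minimum-substring-partition size `(kl/m)n + n`, where `l = P₁(k,p)(m-k)` is the expected
number of breaks per read, is less than `8.4 n`. -/
theorem stmt11 (m k p : ℕ) (n : ℚ) (hn : 0 < n)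
    (hkm : 2 * k = m) (hk : k < 100) (hp : 4 < p) (hpk : 5 * p < k) :
    (k : ℚ) * (P1 k p * ((m - k : ℕ) : ℚ)) / (m : ℚ) * n + n < 8.4 * n := by
  subst hkm
  have h1 : 2 * k - k = k := by omega
  rw [h1]
  have hkQ : (0 : ℚ) < (k : ℚ) := by
    have : 0 < k := by omega
    exact_mod_cast this
  have hP := P1_mul_lt k p hk hp hpk
  have hP0 : (0 : ℚ) ≤ P1 k p := by rw [P1]; positivity
  have expr_eq : (k : ℚ) * (P1 k p * (k : ℚ)) / ((2 * k : ℕ) : ℚ)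
      = P1 k p * (k : ℚ) / 2 := by
    push_cast
    field_simp
  rw [expr_eq]
  have hlt : P1 k p * (k : ℚ) / 2 * n < 37 / 5 * n := by
    apply mul_lt_mul_of_pos_right _ hn
    linarith
  have : (8.4 : ℚ) * n = 37 / 5 * n + n := by norm_num; ring
  rw [this]
  linarith
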